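/- The converse of the following statement is false: 'if a star product of two cubic graphs is PMH then both factors are PMH'. Concretely, letting G₁ and G₂ be two copies of the 3-dimensional hypercube Q₃ (each of which is PMH), there exist vertices u ∈ V(G₁), v ∈ V(G₂) and a star product G₁(u)*G₂(v) which does not have the PMH-property: it admits a perfect matching that cannot be extended to a Hamiltonian cycle. -/

import Mathlib

open SimpleGraph

/-- `H` is the edge set of a Hamiltonian cycle of `G`. -/
def IsHamiltonianCycleSet {V : Type} (G : SimpleGraph V) (H : Set (Sym2 V)) : Prop :=
  ∃ (a : V) (c : G.Walk a a), c.IsCycle ∧ (∀ v : V, v ∈ c.support) ∧ H = {e | e ∈ c.edges}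

/-- `M` is the edge set of a perfect matching of `G`: every vertex is incident
to exactly one edge of `M`. -/
def IsPerfectMatchingSet {V : Type} (G : SimpleGraph V) (M : Set (Sym2 V)) : Prop :=
  M ⊆ G.edgeSet ∧ ∀ v : V, ∃! e, e ∈ M ∧ v ∈ e

/-- `F` is the edge set of a 2-factor of `G` (a 2-regular spanning subgraph):
every vertex is incident to exactly two edges of `F`. -/
def IsTwoFactorSet {V : Type} (G : SimpleGraph V) (F : Set (Sym2 V)) : Prop :=
  F ⊆ G.edgeSet ∧ ∀ v : V, {e ∈ F | v ∈ e}.ncard = 2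

/-- `G` is 2-factor Hamiltonian: every 2-factor of `G` is a Hamiltonian cycle. -/
def Is2FH {V : Type} (G : SimpleGraph V) : Prop :=
  ∀ F, IsTwoFactorSet G F → IsHamiltonianCycleSet G F

/-- `G` has the Perfect-Matching-Hamiltonian property: every perfect matching `M`
can be completed, by a perfect matching `N`, to the edge set of a Hamiltonian cycle. -/
def IsPMH {V : Type} (G : SimpleGraph V) : Prop :=
  ∀ M, IsPerfectMatchingSet G M →
    ∃ N, IsPerfectMatchingSet G N ∧ IsHamiltonianCycleSet G (M ∪ N)

/-- `v` is a `t`-malleable vertex of `G`: `v` has degree `t ≥ 2` and, for every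
perfect matching `M` of `G`, there are Hamiltonian cycles `H 1, …, H (t-1)`, each
extending `M`, which together cover all the edges incident to `v` not in `M`. -/
def IsMalleable {V : Type} (G : SimpleGraph V) (v : V) (t : ℕ) : Prop :=
  2 ≤ t ∧ (G.neighborSet v).ncard = t ∧
    ∀ M, IsPerfectMatchingSet G M →
      ∃ H : Fin (t - 1) → Set (Sym2 V),
        (∀ i, IsHamiltonianCycleSet G (H i) ∧ M ⊆ H i) ∧
        G.incidenceSet v \ M ⊆ ⋃ i, H i

def starAdj {V₁ V₂ : Type} (G₁ : SimpleGraph V₁) (v₁ : V₁) (G₂ : SimpleGraph V₂) (v₂ : V₂)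
    (σ : ↥(G₁.neighborSet v₁) ≃ ↥(G₂.neighborSet v₂)) :
    ({x : V₁ // x ≠ v₁} ⊕ {y : V₂ // y ≠ v₂}) → ({x : V₁ // x ≠ v₁} ⊕ {y : V₂ // y ≠ v₂}) → Prop
  | Sum.inl a, Sum.inl b => G₁.Adj a.1 b.1
  | Sum.inl a, Sum.inr b => ∃ (h₁ : a.1 ∈ G₁.neighborSet v₁) (h₂ : b.1 ∈ G₂.neighborSet v₂),
      σ ⟨a.1, h₁⟩ = ⟨b.1, h₂⟩
  | Sum.inr b, Sum.inl a => ∃ (h₁ : a.1 ∈ G₁.neighborSet v₁) (h₂ : b.1 ∈ G₂.neighborSet v₂),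
      σ ⟨a.1, h₁⟩ = ⟨b.1, h₂⟩
  | Sum.inr a, Sum.inr b => G₂.Adj a.1 b.1

/-- A star product `G₁(v₁)*G₂(v₂)`: delete `v₁` and `v₂` and join the neighbours of
`v₁` to the neighbours of `v₂` by three new edges forming a perfect matching between
them; the matching is encoded by the bijection `σ`. -/
def starProd {V₁ V₂ : Type} (G₁ : SimpleGraph V₁) (v₁ : V₁) (G₂ : SimpleGraph V₂) (v₂ : V₂)
    (σ : ↥(G₁.neighborSet v₁) ≃ ↥(G₂.neighborSet v₂)) :
    SimpleGraph ({x : V₁ // x ≠ v₁} ⊕ {y : V₂ // y ≠ v₂}) where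
  Adj := starAdj G₁ v₁ G₂ v₂ σ
  symm := ⟨by
    rintro (a | a) (b | b) h
    · exact G₁.adj_symm h
    · exact h
    · exact h
    · exact G₂.adj_symm h⟩
  loopless := ⟨by
    rintro (a | a) h
    · exact G₁.irrefl h
    · exact G₂.irrefl h⟩

/-- The 3-dimensional hypercube graph `Q₃`: vertices are the functions
`Fin 3 → Fin 2`, two being adjacent when they differ in exactly one coordinate. -/
def Q3 : SimpleGraph (Fin 3 → Fin 2) where
  Adj x y := ∃! i, x i ≠ y i
  symm := ⟨by rintro x y ⟨i, hi, hu⟩; exact ⟨i, hi.symm, fun j hj => hu j hj.symm⟩⟩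
  loopless := ⟨by rintro x ⟨i, hi, -⟩; exact hi rfl⟩

set_option maxHeartbeats 4000000
set_option maxRecDepth 20000

section helpers
variable {V : Type} {G : SimpleGraph V} {M N : Set (Sym2 V)}

lemma pm_partner (h : IsPerfectMatchingSet G M) (w : V) :
    ∃ u, G.Adj w u ∧ s(w, u) ∈ M := by
  obtain ⟨e, ⟨heM, hw⟩, -⟩ := h.2 w
  have he : e ∈ G.edgeSet := h.1 heM
  refine ⟨Sym2.Mem.other hw, ?_, ?_⟩
  · have := Sym2.other_spec hw
    rw [← this] at he
    exact he
  · rw [Sym2.other_spec hw]; exact heM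

lemma pm_unique (h : IsPerfectMatchingSet G M) {w u u' : V}
    (h1 : s(w, u) ∈ M) (h2 : s(w, u') ∈ M) : u = u' := by
  obtain ⟨e, -, hu⟩ := h.2 w
  have e1 := hu _ ⟨h1, Sym2.mem_mk_left w u⟩
  have e2 := hu _ ⟨h2, Sym2.mem_mk_left w u'⟩
  rw [← e2] at e1
  exact Sym2.congr_right.mp e1

lemma pm_eq (h : IsPerfectMatchingSet G M) (S : Finset (Sym2 V))
    (hsub : ∀ e ∈ S, e ∈ M) (hcov : ∀ x : V, ∃ e ∈ S, x ∈ e) : M = ↑S := by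
  ext e
  constructor
  · intro heM
    have he : e ∈ G.edgeSet := h.1 heM
    induction e with
    | _ x y =>
      obtain ⟨e', he'S, hxe'⟩ := hcov x
      obtain ⟨f, -, hu⟩ := h.2 x
      have e1 := hu _ ⟨heM, Sym2.mem_mk_left x y⟩
      have e2 := hu _ ⟨hsub e' he'S, hxe'⟩
      rw [e1, ← e2]; exact he'S
  · intro heS; exact hsub e heS

lemma pm_of_finset [DecidableEq V] (S : Finset (Sym2 V))
    (h1 : ∀ e ∈ S, e ∈ G.edgeSet)
    (h2 : ∀ v : V, (S.filter (fun e => v ∈ e)).card = 1) :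
    IsPerfectMatchingSet G ↑S := by
  constructor
  · intro e he; exact h1 e he
  · intro v
    obtain ⟨e, he⟩ := Finset.card_eq_one.mp (h2 v)
    refine ⟨e, ?_, ?_⟩
    · have : e ∈ S.filter (fun e => v ∈ e) := he ▸ Finset.mem_singleton_self e
      rw [Finset.mem_filter] at this
      exact ⟨this.1, this.2⟩
    · rintro y ⟨hyS, hvy⟩
      have : y ∈ S.filter (fun e => v ∈ e) := Finset.mem_filter.mpr ⟨hyS, hvy⟩
      rw [he, Finset.mem_singleton] at this
      exact this

lemma walk_const (f : V → Bool) {a b : V} (p : G.Walk a b)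
    (h : ∀ x y : V, s(x, y) ∈ p.edges → f x = f y) :
    ∀ x ∈ p.support, f x = f a := by
  induction p with
  | nil => intro x hx; simp at hx; subst hx; rfl
  | @cons u c w hadj p ih =>
    intro x hx
    rw [Walk.support_cons] at hx
    rcases List.mem_cons.mp hx with rfl | hx'
    · rfl
    · have h1 : f u = f c := h u c (by rw [Walk.edges_cons]; exact List.mem_cons_self)
      have h2 := ih (fun x y hxy => h x y (by rw [Walk.edges_cons]; exact List.mem_cons_of_mem _ hxy)) x hx'
      rw [h2, h1]

lemma two_edges_of_cycle [DecidableEq V] {a : V} {c : G.Walk a a} (hc : c.IsCycle)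
    {v : V} (hv : v ∈ c.support) :
    ∃ e₁ e₂, e₁ ∈ c.edges ∧ e₂ ∈ c.edges ∧ e₁ ≠ e₂ ∧ v ∈ e₁ ∧ v ∈ e₂ := by
  have hd : (c.rotate v hv).IsCycle := hc.rotate hv
  have hed : ∀ e, e ∈ (c.rotate v hv).edges ↔ e ∈ c.edges := fun e =>
    (c.rotate_edges v hv).mem_iff
  obtain ⟨u, hadj, q, hq⟩ := Walk.not_nil_iff.mp hd.not_nil
  rw [hq] at hd hed
  have hqnn : ¬ q.Nil := by
    intro hn
    exact G.irrefl (hn.eq ▸ hadj)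
  obtain ⟨u', hadj', q', hq'⟩ := Walk.not_nil_iff.mp (by
    rwa [Walk.nil_iff_length_eq, Walk.length_reverse, ← Walk.nil_iff_length_eq] : ¬ q.reverse.Nil)
  have h2 : s(v, u') ∈ q.edges := by
    have : s(v, u') ∈ q.reverse.edges := by
      rw [hq', Walk.edges_cons]; exact List.mem_cons_self
    rwa [Walk.edges_reverse, List.mem_reverse] at this
  have hni : s(v, u) ∉ q.edges := ((Walk.cons_isCycle_iff q hadj).mp hd).2
  refine ⟨s(v, u), s(v, u'), ?_, ?_, ?_, ?_, ?_⟩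
  · rw [← hed]; rw [Walk.edges_cons]; exact List.mem_cons_self
  · rw [← hed]; rw [Walk.edges_cons]; exact List.mem_cons_of_mem _ h2
  · intro hee; rw [hee] at hni; exact hni h2
  · exact Sym2.mem_mk_left v u
  · exact Sym2.mem_mk_left v u'

lemma pm_pm_disjoint [DecidableEq V] (hM : IsPerfectMatchingSet G M)
    (hN : IsPerfectMatchingSet G N) {a : V} {c : G.Walk a a} (hc : c.IsCycle)
    (hsup : ∀ v : V, v ∈ c.support) (hH : M ∪ N = {e | e ∈ c.edges}) :
    ∀ e ∈ M, e ∉ N := by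
  intro e heM heN
  have he : e ∈ G.edgeSet := hM.1 heM
  induction e with
  | _ x y =>
    obtain ⟨e₁, e₂, he₁, he₂, hne, hx₁, hx₂⟩ := two_edges_of_cycle hc (hsup x)
    have hmem : ∀ e', e' ∈ c.edges → x ∈ e' → e' = s(x, y) := by
      intro e' he' hxe'
      have : e' ∈ M ∪ N := by rw [hH]; exact he'
      rcases this with h | h
      · obtain ⟨f, -, hu⟩ := hM.2 x
        rw [hu _ ⟨h, hxe'⟩, ← hu _ ⟨heM, Sym2.mem_mk_left x y⟩]
      · obtain ⟨f, -, hu⟩ := hN.2 x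
        rw [hu _ ⟨h, hxe'⟩, ← hu _ ⟨heN, Sym2.mem_mk_left x y⟩]
    exact hne ((hmem e₁ he₁ hx₁).trans (hmem e₂ he₂ hx₂).symm)

instance {u v : V} [DecidableEq V] [DecidableRel G.Adj] (p : G.Walk u v) : Decidable p.IsTrail :=
  decidable_of_iff _ (Walk.isTrail_def p).symm

instance {u : V} [DecidableEq V] [DecidableRel G.Adj] (p : G.Walk u u) : Decidable p.IsCircuit :=
  decidable_of_iff (p.IsTrail ∧ p ≠ Walk.nil) ⟨fun ⟨h1, h2⟩ => ⟨h1, h2⟩, fun ⟨h1, h2⟩ => ⟨h1, h2⟩⟩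

instance {u : V} [DecidableEq V] [DecidableRel G.Adj] (p : G.Walk u u) : Decidable p.IsCycle :=
  decidable_of_iff (p.IsCircuit ∧ p.support.tail.Nodup) ⟨fun ⟨h1, h2⟩ => ⟨h1, h2⟩, fun ⟨h1, h2⟩ => ⟨h1, h2⟩⟩

end helpers

instance (priority := 2000) : DecidableEq (Fin 3 → Fin 2) := fun x y =>
  decidable_of_iff (x 0 = y 0 ∧ x 1 = y 1 ∧ x 2 = y 2)
    ⟨fun ⟨h0, h1, h2⟩ => funext fun i => by fin_cases i <;> assumption,
     fun h => by subst h; exact ⟨rfl, rfl, rfl⟩⟩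

instance (priority := 2000) : Fintype (Fin 3 → Fin 2) :=
  ⟨⟨([![0,0,0],![0,0,1],![0,1,0],![0,1,1],![1,0,0],![1,0,1],![1,1,0],![1,1,1]] : List (Fin 3 → Fin 2)), by decide⟩, by
    intro x
    have : x = ![x 0, x 1, x 2] := funext fun i => by fin_cases i <;> rfl
    rw [this]
    revert x
    decide⟩

instance : DecidableRel Q3.Adj := fun x y =>
  decidable_of_iff (∃ i, (x i ≠ y i) ∧ ∀ j, (x j ≠ y j) → j = i) Iff.rfl

def σ0 : ↥(Q3.neighborSet ![0,0,0]) ≃ ↥(Q3.neighborSet ![0,0,0]) := Equiv.refl _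

abbrev WV : Type := ({x : Fin 3 → Fin 2 // x ≠ ![0,0,0]} ⊕ {y : Fin 3 → Fin 2 // y ≠ ![0,0,0]})

abbrev G2 : SimpleGraph WV := starProd Q3 ![0,0,0] Q3 ![0,0,0] σ0

instance decNb (v x : Fin 3 → Fin 2) : Decidable (x ∈ Q3.neighborSet v) :=
  decidable_of_iff (Q3.Adj v x) Iff.rfl

instance : DecidableRel G2.Adj := fun a b =>
  match a, b with
  | Sum.inl a, Sum.inl b => inferInstanceAs (Decidable (Q3.Adj a.1 b.1))
  | Sum.inl a, Sum.inr b => inferInstanceAs (Decidable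
      (∃ (h₁ : a.1 ∈ Q3.neighborSet ![0,0,0]) (h₂ : b.1 ∈ Q3.neighborSet ![0,0,0]),
        σ0 ⟨a.1, h₁⟩ = ⟨b.1, h₂⟩))
  | Sum.inr a, Sum.inl b => inferInstanceAs (Decidable
      (∃ (h₁ : b.1 ∈ Q3.neighborSet ![0,0,0]) (h₂ : a.1 ∈ Q3.neighborSet ![0,0,0]),
        σ0 ⟨b.1, h₁⟩ = ⟨a.1, h₂⟩))
  | Sum.inr a, Sum.inr b => inferInstanceAs (Decidable (Q3.Adj a.1 b.1))


lemma q3pmh : IsPMH Q3 := by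
  intro M hM
  obtain ⟨u1, ha2, hu3⟩ := pm_partner hM ![0,0,0]
  have : ∀ x, Q3.Adj ![0,0,0] x → x = ![0,0,1] ∨ x = ![0,1,0] ∨ x = ![1,0,0] := by decide
  rcases this u1 ha2 with rfl|rfl|rfl
  · -- take (0, 0, 0) - (0, 0, 1)
    obtain ⟨u4, ha5, hu6⟩ := pm_partner hM ![0,1,0]
    have : ∀ x, Q3.Adj ![0,1,0] x → x = ![0,0,0] ∨ x = ![0,1,1] ∨ x = ![1,1,0] := by decide
    rcases this u4 ha5 with rfl|rfl|rfl
    · -- conflict: (0, 0, 0) already matched to (0, 0, 1)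
      have hp7 : s(![0,0,0], ![0,0,1]) ∈ M := hu3
      have hx8 : s(![0,0,0], ![0,1,0]) ∈ M := by rw [Sym2.eq_swap] at hu6; exact hu6
      exact absurd (pm_unique hM hp7 hx8) (by decide)
    · -- take (0, 1, 0) - (0, 1, 1)
      obtain ⟨u9, ha10, hu11⟩ := pm_partner hM ![1,0,0]
      have : ∀ x, Q3.Adj ![1,0,0] x → x = ![0,0,0] ∨ x = ![1,0,1] ∨ x = ![1,1,0] := by decide
      rcases this u9 ha10 with rfl|rfl|rfl
      · -- conflict: (0, 0, 0) already matched to (0, 0, 1)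
        have hp12 : s(![0,0,0], ![0,0,1]) ∈ M := hu3
        have hx13 : s(![0,0,0], ![1,0,0]) ∈ M := by rw [Sym2.eq_swap] at hu11; exact hu11
        exact absurd (pm_unique hM hp12 hx13) (by decide)
      · -- take (1, 0, 0) - (1, 0, 1)
        obtain ⟨u14, ha15, hu16⟩ := pm_partner hM ![1,1,0]
        have : ∀ x, Q3.Adj ![1,1,0] x → x = ![0,1,0] ∨ x = ![1,0,0] ∨ x = ![1,1,1] := by decide
        rcases this u14 ha15 with rfl|rfl|rfl
        · -- conflict: (0, 1, 0) already matched to (0, 1, 1)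
          have hp17 : s(![0,1,0], ![0,1,1]) ∈ M := hu6
          have hx18 : s(![0,1,0], ![1,1,0]) ∈ M := by rw [Sym2.eq_swap] at hu16; exact hu16
          exact absurd (pm_unique hM hp17 hx18) (by decide)
        · -- conflict: (1, 0, 0) already matched to (1, 0, 1)
          have hp19 : s(![1,0,0], ![1,0,1]) ∈ M := hu11
          have hx20 : s(![1,0,0], ![1,1,0]) ∈ M := by rw [Sym2.eq_swap] at hu16; exact hu16
          exact absurd (pm_unique hM hp19 hx20) (by decide)
        · -- take (1, 1, 0) - (1, 1, 1)
          have hMeq21 : M = ↑({s(![0,0,0], ![0,0,1]), s(![0,1,0], ![0,1,1]), s(![1,0,0], ![1,0,1]), s(![1,1,0], ![1,1,1])} : Finset (Sym2 (Fin 3 → Fin 2))) := by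
            refine pm_eq hM _ ?_ (by decide)
            intro e he
            simp only [Finset.mem_insert, Finset.mem_singleton] at he
            rcases he with rfl|rfl|rfl|rfl
            exacts [hu3, hu6, hu11, hu16]
          refine ⟨↑({s(![0,0,1], ![0,1,1]), s(![0,1,0], ![1,1,0]), s(![1,1,1], ![1,0,1]), s(![1,0,0], ![0,0,0])} : Finset (Sym2 (Fin 3 → Fin 2))), pm_of_finset _ (by decide) (by decide), ![0,0,0], (Walk.cons (by decide : Q3.Adj ![0,0,0] ![0,0,1]) (Walk.cons (by decide : Q3.Adj ![0,0,1] ![0,1,1]) (Walk.cons (by decide : Q3.Adj ![0,1,1] ![0,1,0]) (Walk.cons (by decide : Q3.Adj ![0,1,0] ![1,1,0]) (Walk.cons (by decide : Q3.Adj ![1,1,0] ![1,1,1]) (Walk.cons (by decide : Q3.Adj ![1,1,1] ![1,0,1]) (Walk.cons (by decide : Q3.Adj ![1,0,1] ![1,0,0]) (Walk.cons (by decide : Q3.Adj ![1,0,0] ![0,0,0]) (Walk.nil : Q3.Walk ![0,0,0] ![0,0,0]))))))))), by decide, by decide, ?_⟩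
          rw [hMeq21]
          rw [← Finset.coe_union]
          ext e
          rw [Finset.mem_coe, Set.mem_setOf_eq]
          revert e
          decide
      · -- take (1, 0, 0) - (1, 1, 0)
        obtain ⟨u23, ha24, hu25⟩ := pm_partner hM ![1,0,1]
        have : ∀ x, Q3.Adj ![1,0,1] x → x = ![0,0,1] ∨ x = ![1,0,0] ∨ x = ![1,1,1] := by decide
        rcases this u23 ha24 with rfl|rfl|rfl
        · -- conflict: (0, 0, 1) already matched to (0, 0, 0)
          have hp26 : s(![0,0,1], ![0,0,0]) ∈ M := by rw [Sym2.eq_swap] at hu3; exact hu3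
          have hx27 : s(![0,0,1], ![1,0,1]) ∈ M := by rw [Sym2.eq_swap] at hu25; exact hu25
          exact absurd (pm_unique hM hp26 hx27) (by decide)
        · -- conflict: (1, 0, 0) already matched to (1, 1, 0)
          have hp28 : s(![1,0,0], ![1,1,0]) ∈ M := hu11
          have hx29 : s(![1,0,0], ![1,0,1]) ∈ M := by rw [Sym2.eq_swap] at hu25; exact hu25
          exact absurd (pm_unique hM hp28 hx29) (by decide)
        · -- take (1, 0, 1) - (1, 1, 1)
          have hMeq30 : M = ↑({s(![0,0,0], ![0,0,1]), s(![0,1,0], ![0,1,1]), s(![1,0,0], ![1,1,0]), s(![1,0,1], ![1,1,1])} : Finset (Sym2 (Fin 3 → Fin 2))) := by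
            refine pm_eq hM _ ?_ (by decide)
            intro e he
            simp only [Finset.mem_insert, Finset.mem_singleton] at he
            rcases he with rfl|rfl|rfl|rfl
            exacts [hu3, hu6, hu11, hu25]
          refine ⟨↑({s(![0,0,1], ![1,0,1]), s(![1,1,1], ![0,1,1]), s(![0,1,0], ![1,1,0]), s(![1,0,0], ![0,0,0])} : Finset (Sym2 (Fin 3 → Fin 2))), pm_of_finset _ (by decide) (by decide), ![0,0,0], (Walk.cons (by decide : Q3.Adj ![0,0,0] ![0,0,1]) (Walk.cons (by decide : Q3.Adj ![0,0,1] ![1,0,1]) (Walk.cons (by decide : Q3.Adj ![1,0,1] ![1,1,1]) (Walk.cons (by decide : Q3.Adj ![1,1,1] ![0,1,1]) (Walk.cons (by decide : Q3.Adj ![0,1,1] ![0,1,0]) (Walk.cons (by decide : Q3.Adj ![0,1,0] ![1,1,0]) (Walk.cons (by decide : Q3.Adj ![1,1,0] ![1,0,0]) (Walk.cons (by decide : Q3.Adj ![1,0,0] ![0,0,0]) (Walk.nil : Q3.Walk ![0,0,0] ![0,0,0]))))))))), by decide, by decide, ?_⟩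
          rw [hMeq30]
          rw [← Finset.coe_union]
          ext e
          rw [Finset.mem_coe, Set.mem_setOf_eq]
          revert e
          decide
    · -- take (0, 1, 0) - (1, 1, 0)
      obtain ⟨u32, ha33, hu34⟩ := pm_partner hM ![0,1,1]
      have : ∀ x, Q3.Adj ![0,1,1] x → x = ![0,0,1] ∨ x = ![0,1,0] ∨ x = ![1,1,1] := by decide
      rcases this u32 ha33 with rfl|rfl|rfl
      · -- conflict: (0, 0, 1) already matched to (0, 0, 0)
        have hp35 : s(![0,0,1], ![0,0,0]) ∈ M := by rw [Sym2.eq_swap] at hu3; exact hu3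
        have hx36 : s(![0,0,1], ![0,1,1]) ∈ M := by rw [Sym2.eq_swap] at hu34; exact hu34
        exact absurd (pm_unique hM hp35 hx36) (by decide)
      · -- conflict: (0, 1, 0) already matched to (1, 1, 0)
        have hp37 : s(![0,1,0], ![1,1,0]) ∈ M := hu6
        have hx38 : s(![0,1,0], ![0,1,1]) ∈ M := by rw [Sym2.eq_swap] at hu34; exact hu34
        exact absurd (pm_unique hM hp37 hx38) (by decide)
      · -- take (0, 1, 1) - (1, 1, 1)
        obtain ⟨u39, ha40, hu41⟩ := pm_partner hM ![1,0,0]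
        have : ∀ x, Q3.Adj ![1,0,0] x → x = ![0,0,0] ∨ x = ![1,0,1] ∨ x = ![1,1,0] := by decide
        rcases this u39 ha40 with rfl|rfl|rfl
        · -- conflict: (0, 0, 0) already matched to (0, 0, 1)
          have hp42 : s(![0,0,0], ![0,0,1]) ∈ M := hu3
          have hx43 : s(![0,0,0], ![1,0,0]) ∈ M := by rw [Sym2.eq_swap] at hu41; exact hu41
          exact absurd (pm_unique hM hp42 hx43) (by decide)
        · -- take (1, 0, 0) - (1, 0, 1)
          have hMeq44 : M = ↑({s(![0,0,0], ![0,0,1]), s(![0,1,0], ![1,1,0]), s(![0,1,1], ![1,1,1]), s(![1,0,0], ![1,0,1])} : Finset (Sym2 (Fin 3 → Fin 2))) := by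
            refine pm_eq hM _ ?_ (by decide)
            intro e he
            simp only [Finset.mem_insert, Finset.mem_singleton] at he
            rcases he with rfl|rfl|rfl|rfl
            exacts [hu3, hu6, hu34, hu41]
          refine ⟨↑({s(![0,0,1], ![0,1,1]), s(![1,1,1], ![1,0,1]), s(![1,0,0], ![1,1,0]), s(![0,1,0], ![0,0,0])} : Finset (Sym2 (Fin 3 → Fin 2))), pm_of_finset _ (by decide) (by decide), ![0,0,0], (Walk.cons (by decide : Q3.Adj ![0,0,0] ![0,0,1]) (Walk.cons (by decide : Q3.Adj ![0,0,1] ![0,1,1]) (Walk.cons (by decide : Q3.Adj ![0,1,1] ![1,1,1]) (Walk.cons (by decide : Q3.Adj ![1,1,1] ![1,0,1]) (Walk.cons (by decide : Q3.Adj ![1,0,1] ![1,0,0]) (Walk.cons (by decide : Q3.Adj ![1,0,0] ![1,1,0]) (Walk.cons (by decide : Q3.Adj ![1,1,0] ![0,1,0]) (Walk.cons (by decide : Q3.Adj ![0,1,0] ![0,0,0]) (Walk.nil : Q3.Walk ![0,0,0] ![0,0,0]))))))))), by decide, by decide, ?_⟩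
          rw [hMeq44]
          rw [← Finset.coe_union]
          ext e
          rw [Finset.mem_coe, Set.mem_setOf_eq]
          revert e
          decide
        · -- conflict: (1, 1, 0) already matched to (0, 1, 0)
          have hp46 : s(![1,1,0], ![0,1,0]) ∈ M := by rw [Sym2.eq_swap] at hu6; exact hu6
          have hx47 : s(![1,1,0], ![1,0,0]) ∈ M := by rw [Sym2.eq_swap] at hu41; exact hu41
          exact absurd (pm_unique hM hp46 hx47) (by decide)
  · -- take (0, 0, 0) - (0, 1, 0)
    obtain ⟨u48, ha49, hu50⟩ := pm_partner hM ![0,0,1]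
    have : ∀ x, Q3.Adj ![0,0,1] x → x = ![0,0,0] ∨ x = ![0,1,1] ∨ x = ![1,0,1] := by decide
    rcases this u48 ha49 with rfl|rfl|rfl
    · -- conflict: (0, 0, 0) already matched to (0, 1, 0)
      have hp51 : s(![0,0,0], ![0,1,0]) ∈ M := hu3
      have hx52 : s(![0,0,0], ![0,0,1]) ∈ M := by rw [Sym2.eq_swap] at hu50; exact hu50
      exact absurd (pm_unique hM hp51 hx52) (by decide)
    · -- take (0, 0, 1) - (0, 1, 1)
      obtain ⟨u53, ha54, hu55⟩ := pm_partner hM ![1,0,0]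
      have : ∀ x, Q3.Adj ![1,0,0] x → x = ![0,0,0] ∨ x = ![1,0,1] ∨ x = ![1,1,0] := by decide
      rcases this u53 ha54 with rfl|rfl|rfl
      · -- conflict: (0, 0, 0) already matched to (0, 1, 0)
        have hp56 : s(![0,0,0], ![0,1,0]) ∈ M := hu3
        have hx57 : s(![0,0,0], ![1,0,0]) ∈ M := by rw [Sym2.eq_swap] at hu55; exact hu55
        exact absurd (pm_unique hM hp56 hx57) (by decide)
      · -- take (1, 0, 0) - (1, 0, 1)
        obtain ⟨u58, ha59, hu60⟩ := pm_partner hM ![1,1,0]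
        have : ∀ x, Q3.Adj ![1,1,0] x → x = ![0,1,0] ∨ x = ![1,0,0] ∨ x = ![1,1,1] := by decide
        rcases this u58 ha59 with rfl|rfl|rfl
        · -- conflict: (0, 1, 0) already matched to (0, 0, 0)
          have hp61 : s(![0,1,0], ![0,0,0]) ∈ M := by rw [Sym2.eq_swap] at hu3; exact hu3
          have hx62 : s(![0,1,0], ![1,1,0]) ∈ M := by rw [Sym2.eq_swap] at hu60; exact hu60
          exact absurd (pm_unique hM hp61 hx62) (by decide)
        · -- conflict: (1, 0, 0) already matched to (1, 0, 1)
          have hp63 : s(![1,0,0], ![1,0,1]) ∈ M := hu55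
          have hx64 : s(![1,0,0], ![1,1,0]) ∈ M := by rw [Sym2.eq_swap] at hu60; exact hu60
          exact absurd (pm_unique hM hp63 hx64) (by decide)
        · -- take (1, 1, 0) - (1, 1, 1)
          have hMeq65 : M = ↑({s(![0,0,0], ![0,1,0]), s(![0,0,1], ![0,1,1]), s(![1,0,0], ![1,0,1]), s(![1,1,0], ![1,1,1])} : Finset (Sym2 (Fin 3 → Fin 2))) := by
            refine pm_eq hM _ ?_ (by decide)
            intro e he
            simp only [Finset.mem_insert, Finset.mem_singleton] at he
            rcases he with rfl|rfl|rfl|rfl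
            exacts [hu3, hu50, hu55, hu60]
          refine ⟨↑({s(![0,1,0], ![1,1,0]), s(![1,1,1], ![0,1,1]), s(![0,0,1], ![1,0,1]), s(![1,0,0], ![0,0,0])} : Finset (Sym2 (Fin 3 → Fin 2))), pm_of_finset _ (by decide) (by decide), ![0,0,0], (Walk.cons (by decide : Q3.Adj ![0,0,0] ![0,1,0]) (Walk.cons (by decide : Q3.Adj ![0,1,0] ![1,1,0]) (Walk.cons (by decide : Q3.Adj ![1,1,0] ![1,1,1]) (Walk.cons (by decide : Q3.Adj ![1,1,1] ![0,1,1]) (Walk.cons (by decide : Q3.Adj ![0,1,1] ![0,0,1]) (Walk.cons (by decide : Q3.Adj ![0,0,1] ![1,0,1]) (Walk.cons (by decide : Q3.Adj ![1,0,1] ![1,0,0]) (Walk.cons (by decide : Q3.Adj ![1,0,0] ![0,0,0]) (Walk.nil : Q3.Walk ![0,0,0] ![0,0,0]))))))))), by decide, by decide, ?_⟩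
          rw [hMeq65]
          rw [← Finset.coe_union]
          ext e
          rw [Finset.mem_coe, Set.mem_setOf_eq]
          revert e
          decide
      · -- take (1, 0, 0) - (1, 1, 0)
        obtain ⟨u67, ha68, hu69⟩ := pm_partner hM ![1,0,1]
        have : ∀ x, Q3.Adj ![1,0,1] x → x = ![0,0,1] ∨ x = ![1,0,0] ∨ x = ![1,1,1] := by decide
        rcases this u67 ha68 with rfl|rfl|rfl
        · -- conflict: (0, 0, 1) already matched to (0, 1, 1)
          have hp70 : s(![0,0,1], ![0,1,1]) ∈ M := hu50
          have hx71 : s(![0,0,1], ![1,0,1]) ∈ M := by rw [Sym2.eq_swap] at hu69; exact hu69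
          exact absurd (pm_unique hM hp70 hx71) (by decide)
        · -- conflict: (1, 0, 0) already matched to (1, 1, 0)
          have hp72 : s(![1,0,0], ![1,1,0]) ∈ M := hu55
          have hx73 : s(![1,0,0], ![1,0,1]) ∈ M := by rw [Sym2.eq_swap] at hu69; exact hu69
          exact absurd (pm_unique hM hp72 hx73) (by decide)
        · -- take (1, 0, 1) - (1, 1, 1)
          have hMeq74 : M = ↑({s(![0,0,0], ![0,1,0]), s(![0,0,1], ![0,1,1]), s(![1,0,0], ![1,1,0]), s(![1,0,1], ![1,1,1])} : Finset (Sym2 (Fin 3 → Fin 2))) := by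
            refine pm_eq hM _ ?_ (by decide)
            intro e he
            simp only [Finset.mem_insert, Finset.mem_singleton] at he
            rcases he with rfl|rfl|rfl|rfl
            exacts [hu3, hu50, hu55, hu69]
          refine ⟨↑({s(![0,0,0], ![0,0,1]), s(![0,1,1], ![1,1,1]), s(![1,0,1], ![1,0,0]), s(![1,1,0], ![0,1,0])} : Finset (Sym2 (Fin 3 → Fin 2))), pm_of_finset _ (by decide) (by decide), ![0,0,0], (Walk.cons (by decide : Q3.Adj ![0,0,0] ![0,0,1]) (Walk.cons (by decide : Q3.Adj ![0,0,1] ![0,1,1]) (Walk.cons (by decide : Q3.Adj ![0,1,1] ![1,1,1]) (Walk.cons (by decide : Q3.Adj ![1,1,1] ![1,0,1]) (Walk.cons (by decide : Q3.Adj ![1,0,1] ![1,0,0]) (Walk.cons (by decide : Q3.Adj ![1,0,0] ![1,1,0]) (Walk.cons (by decide : Q3.Adj ![1,1,0] ![0,1,0]) (Walk.cons (by decide : Q3.Adj ![0,1,0] ![0,0,0]) (Walk.nil : Q3.Walk ![0,0,0] ![0,0,0]))))))))), by decide, by decide, ?_⟩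
          rw [hMeq74]
          rw [← Finset.coe_union]
          ext e
          rw [Finset.mem_coe, Set.mem_setOf_eq]
          revert e
          decide
    · -- take (0, 0, 1) - (1, 0, 1)
      obtain ⟨u76, ha77, hu78⟩ := pm_partner hM ![0,1,1]
      have : ∀ x, Q3.Adj ![0,1,1] x → x = ![0,0,1] ∨ x = ![0,1,0] ∨ x = ![1,1,1] := by decide
      rcases this u76 ha77 with rfl|rfl|rfl
      · -- conflict: (0, 0, 1) already matched to (1, 0, 1)
        have hp79 : s(![0,0,1], ![1,0,1]) ∈ M := hu50
        have hx80 : s(![0,0,1], ![0,1,1]) ∈ M := by rw [Sym2.eq_swap] at hu78; exact hu78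
        exact absurd (pm_unique hM hp79 hx80) (by decide)
      · -- conflict: (0, 1, 0) already matched to (0, 0, 0)
        have hp81 : s(![0,1,0], ![0,0,0]) ∈ M := by rw [Sym2.eq_swap] at hu3; exact hu3
        have hx82 : s(![0,1,0], ![0,1,1]) ∈ M := by rw [Sym2.eq_swap] at hu78; exact hu78
        exact absurd (pm_unique hM hp81 hx82) (by decide)
      · -- take (0, 1, 1) - (1, 1, 1)
        obtain ⟨u83, ha84, hu85⟩ := pm_partner hM ![1,0,0]
        have : ∀ x, Q3.Adj ![1,0,0] x → x = ![0,0,0] ∨ x = ![1,0,1] ∨ x = ![1,1,0] := by decide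
        rcases this u83 ha84 with rfl|rfl|rfl
        · -- conflict: (0, 0, 0) already matched to (0, 1, 0)
          have hp86 : s(![0,0,0], ![0,1,0]) ∈ M := hu3
          have hx87 : s(![0,0,0], ![1,0,0]) ∈ M := by rw [Sym2.eq_swap] at hu85; exact hu85
          exact absurd (pm_unique hM hp86 hx87) (by decide)
        · -- conflict: (1, 0, 1) already matched to (0, 0, 1)
          have hp88 : s(![1,0,1], ![0,0,1]) ∈ M := by rw [Sym2.eq_swap] at hu50; exact hu50
          have hx89 : s(![1,0,1], ![1,0,0]) ∈ M := by rw [Sym2.eq_swap] at hu85; exact hu85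
          exact absurd (pm_unique hM hp88 hx89) (by decide)
        · -- take (1, 0, 0) - (1, 1, 0)
          have hMeq90 : M = ↑({s(![0,0,0], ![0,1,0]), s(![0,0,1], ![1,0,1]), s(![0,1,1], ![1,1,1]), s(![1,0,0], ![1,1,0])} : Finset (Sym2 (Fin 3 → Fin 2))) := by
            refine pm_eq hM _ ?_ (by decide)
            intro e he
            simp only [Finset.mem_insert, Finset.mem_singleton] at he
            rcases he with rfl|rfl|rfl|rfl
            exacts [hu3, hu50, hu78, hu85]
          refine ⟨↑({s(![0,0,0], ![0,0,1]), s(![1,0,1], ![1,0,0]), s(![1,1,0], ![1,1,1]), s(![0,1,1], ![0,1,0])} : Finset (Sym2 (Fin 3 → Fin 2))), pm_of_finset _ (by decide) (by decide), ![0,0,0], (Walk.cons (by decide : Q3.Adj ![0,0,0] ![0,0,1]) (Walk.cons (by decide : Q3.Adj ![0,0,1] ![1,0,1]) (Walk.cons (by decide : Q3.Adj ![1,0,1] ![1,0,0]) (Walk.cons (by decide : Q3.Adj ![1,0,0] ![1,1,0]) (Walk.cons (by decide : Q3.Adj ![1,1,0] ![1,1,1]) (Walk.cons (by decide : Q3.Adj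 ![1,1,1] ![0,1,1]) (Walk.cons (by decide : Q3.Adj ![0,1,1] ![0,1,0]) (Walk.cons (by decide : Q3.Adj ![0,1,0] ![0,0,0]) (Walk.nil : Q3.Walk ![0,0,0] ![0,0,0]))))))))), by decide, by decide, ?_⟩
          rw [hMeq90]
          rw [← Finset.coe_union]
          ext e
          rw [Finset.mem_coe, Set.mem_setOf_eq]
          revert e
          decide
  · -- take (0, 0, 0) - (1, 0, 0)
    obtain ⟨u92, ha93, hu94⟩ := pm_partner hM ![0,0,1]
    have : ∀ x, Q3.Adj ![0,0,1] x → x = ![0,0,0] ∨ x = ![0,1,1] ∨ x = ![1,0,1] := by decide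
    rcases this u92 ha93 with rfl|rfl|rfl
    · -- conflict: (0, 0, 0) already matched to (1, 0, 0)
      have hp95 : s(![0,0,0], ![1,0,0]) ∈ M := hu3
      have hx96 : s(![0,0,0], ![0,0,1]) ∈ M := by rw [Sym2.eq_swap] at hu94; exact hu94
      exact absurd (pm_unique hM hp95 hx96) (by decide)
    · -- take (0, 0, 1) - (0, 1, 1)
      obtain ⟨u97, ha98, hu99⟩ := pm_partner hM ![0,1,0]
      have : ∀ x, Q3.Adj ![0,1,0] x → x = ![0,0,0] ∨ x = ![0,1,1] ∨ x = ![1,1,0] := by decide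
      rcases this u97 ha98 with rfl|rfl|rfl
      · -- conflict: (0, 0, 0) already matched to (1, 0, 0)
        have hp100 : s(![0,0,0], ![1,0,0]) ∈ M := hu3
        have hx101 : s(![0,0,0], ![0,1,0]) ∈ M := by rw [Sym2.eq_swap] at hu99; exact hu99
        exact absurd (pm_unique hM hp100 hx101) (by decide)
      · -- conflict: (0, 1, 1) already matched to (0, 0, 1)
        have hp102 : s(![0,1,1], ![0,0,1]) ∈ M := by rw [Sym2.eq_swap] at hu94; exact hu94
        have hx103 : s(![0,1,1], ![0,1,0]) ∈ M := by rw [Sym2.eq_swap] at hu99; exact hu99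
        exact absurd (pm_unique hM hp102 hx103) (by decide)
      · -- take (0, 1, 0) - (1, 1, 0)
        obtain ⟨u104, ha105, hu106⟩ := pm_partner hM ![1,0,1]
        have : ∀ x, Q3.Adj ![1,0,1] x → x = ![0,0,1] ∨ x = ![1,0,0] ∨ x = ![1,1,1] := by decide
        rcases this u104 ha105 with rfl|rfl|rfl
        · -- conflict: (0, 0, 1) already matched to (0, 1, 1)
          have hp107 : s(![0,0,1], ![0,1,1]) ∈ M := hu94
          have hx108 : s(![0,0,1], ![1,0,1]) ∈ M := by rw [Sym2.eq_swap] at hu106; exact hu106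
          exact absurd (pm_unique hM hp107 hx108) (by decide)
        · -- conflict: (1, 0, 0) already matched to (0, 0, 0)
          have hp109 : s(![1,0,0], ![0,0,0]) ∈ M := by rw [Sym2.eq_swap] at hu3; exact hu3
          have hx110 : s(![1,0,0], ![1,0,1]) ∈ M := by rw [Sym2.eq_swap] at hu106; exact hu106
          exact absurd (pm_unique hM hp109 hx110) (by decide)
        · -- take (1, 0, 1) - (1, 1, 1)
          have hMeq111 : M = ↑({s(![0,0,0], ![1,0,0]), s(![0,0,1], ![0,1,1]), s(![0,1,0], ![1,1,0]), s(![1,0,1], ![1,1,1])} : Finset (Sym2 (Fin 3 → Fin 2))) := by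
            refine pm_eq hM _ ?_ (by decide)
            intro e he
            simp only [Finset.mem_insert, Finset.mem_singleton] at he
            rcases he with rfl|rfl|rfl|rfl
            exacts [hu3, hu94, hu99, hu106]
          refine ⟨↑({s(![0,0,0], ![0,0,1]), s(![0,1,1], ![0,1,0]), s(![1,1,0], ![1,1,1]), s(![1,0,1], ![1,0,0])} : Finset (Sym2 (Fin 3 → Fin 2))), pm_of_finset _ (by decide) (by decide), ![0,0,0], (Walk.cons (by decide : Q3.Adj ![0,0,0] ![0,0,1]) (Walk.cons (by decide : Q3.Adj ![0,0,1] ![0,1,1]) (Walk.cons (by decide : Q3.Adj ![0,1,1] ![0,1,0]) (Walk.cons (by decide : Q3.Adj ![0,1,0] ![1,1,0]) (Walk.cons (by decide : Q3.Adj ![1,1,0] ![1,1,1]) (Walk.cons (by decide : Q3.Adj ![1,1,1] ![1,0,1]) (Walk.cons (by decide : Q3.Adj ![1,0,1] ![1,0,0]) (Walk.cons (by decide : Q3.Adj ![1,0,0] ![0,0,0]) (Walk.nil : Q3.Walk ![0,0,0] ![0,0,0]))))))))), by decide, by decide, ?_⟩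
          rw [hMeq111]
          rw [← Finset.coe_union]
          ext e
          rw [Finset.mem_coe, Set.mem_setOf_eq]
          revert e
          decide
    · -- take (0, 0, 1) - (1, 0, 1)
      obtain ⟨u113, ha114, hu115⟩ := pm_partner hM ![0,1,0]
      have : ∀ x, Q3.Adj ![0,1,0] x → x = ![0,0,0] ∨ x = ![0,1,1] ∨ x = ![1,1,0] := by decide
      rcases this u113 ha114 with rfl|rfl|rfl
      · -- conflict: (0, 0, 0) already matched to (1, 0, 0)
        have hp116 : s(![0,0,0], ![1,0,0]) ∈ M := hu3
        have hx117 : s(![0,0,0], ![0,1,0]) ∈ M := by rw [Sym2.eq_swap] at hu115; exact hu115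
        exact absurd (pm_unique hM hp116 hx117) (by decide)
      · -- take (0, 1, 0) - (0, 1, 1)
        obtain ⟨u118, ha119, hu120⟩ := pm_partner hM ![1,1,0]
        have : ∀ x, Q3.Adj ![1,1,0] x → x = ![0,1,0] ∨ x = ![1,0,0] ∨ x = ![1,1,1] := by decide
        rcases this u118 ha119 with rfl|rfl|rfl
        · -- conflict: (0, 1, 0) already matched to (0, 1, 1)
          have hp121 : s(![0,1,0], ![0,1,1]) ∈ M := hu115
          have hx122 : s(![0,1,0], ![1,1,0]) ∈ M := by rw [Sym2.eq_swap] at hu120; exact hu120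
          exact absurd (pm_unique hM hp121 hx122) (by decide)
        · -- conflict: (1, 0, 0) already matched to (0, 0, 0)
          have hp123 : s(![1,0,0], ![0,0,0]) ∈ M := by rw [Sym2.eq_swap] at hu3; exact hu3
          have hx124 : s(![1,0,0], ![1,1,0]) ∈ M := by rw [Sym2.eq_swap] at hu120; exact hu120
          exact absurd (pm_unique hM hp123 hx124) (by decide)
        · -- take (1, 1, 0) - (1, 1, 1)
          have hMeq125 : M = ↑({s(![0,0,0], ![1,0,0]), s(![0,0,1], ![1,0,1]), s(![0,1,0], ![0,1,1]), s(![1,1,0], ![1,1,1])} : Finset (Sym2 (Fin 3 → Fin 2))) := by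
            refine pm_eq hM _ ?_ (by decide)
            intro e he
            simp only [Finset.mem_insert, Finset.mem_singleton] at he
            rcases he with rfl|rfl|rfl|rfl
            exacts [hu3, hu94, hu115, hu120]
          refine ⟨↑({s(![0,0,0], ![0,1,0]), s(![0,1,1], ![0,0,1]), s(![1,0,1], ![1,1,1]), s(![1,1,0], ![1,0,0])} : Finset (Sym2 (Fin 3 → Fin 2))), pm_of_finset _ (by decide) (by decide), ![0,0,0], (Walk.cons (by decide : Q3.Adj ![0,0,0] ![0,1,0]) (Walk.cons (by decide : Q3.Adj ![0,1,0] ![0,1,1]) (Walk.cons (by decide : Q3.Adj ![0,1,1] ![0,0,1]) (Walk.cons (by decide : Q3.Adj ![0,0,1] ![1,0,1]) (Walk.cons (by decide : Q3.Adj ![1,0,1] ![1,1,1]) (Walk.cons (by decide : Q3.Adj ![1,1,1] ![1,1,0]) (Walk.cons (by decide : Q3.Adj ![1,1,0] ![1,0,0]) (Walk.cons (by decide : Q3.Adj ![1,0,0] ![0,0,0]) (Walk.nil : Q3.Walk ![0,0,0] ![0,0,0]))))))))), by decide, by decide, ?_⟩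
          rw [hMeq125]
          rw [← Finset.coe_union]
          ext e
          rw [Finset.mem_coe, Set.mem_setOf_eq]
          revert e
          decide
      · -- take (0, 1, 0) - (1, 1, 0)
        obtain ⟨u127, ha128, hu129⟩ := pm_partner hM ![0,1,1]
        have : ∀ x, Q3.Adj ![0,1,1] x → x = ![0,0,1] ∨ x = ![0,1,0] ∨ x = ![1,1,1] := by decide
        rcases this u127 ha128 with rfl|rfl|rfl
        · -- conflict: (0, 0, 1) already matched to (1, 0, 1)
          have hp130 : s(![0,0,1], ![1,0,1]) ∈ M := hu94
          have hx131 : s(![0,0,1], ![0,1,1]) ∈ M := by rw [Sym2.eq_swap] at hu129; exact hu129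
          exact absurd (pm_unique hM hp130 hx131) (by decide)
        · -- conflict: (0, 1, 0) already matched to (1, 1, 0)
          have hp132 : s(![0,1,0], ![1,1,0]) ∈ M := hu115
          have hx133 : s(![0,1,0], ![0,1,1]) ∈ M := by rw [Sym2.eq_swap] at hu129; exact hu129
          exact absurd (pm_unique hM hp132 hx133) (by decide)
        · -- take (0, 1, 1) - (1, 1, 1)
          have hMeq134 : M = ↑({s(![0,0,0], ![1,0,0]), s(![0,0,1], ![1,0,1]), s(![0,1,0], ![1,1,0]), s(![0,1,1], ![1,1,1])} : Finset (Sym2 (Fin 3 → Fin 2))) := by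
            refine pm_eq hM _ ?_ (by decide)
            intro e he
            simp only [Finset.mem_insert, Finset.mem_singleton] at he
            rcases he with rfl|rfl|rfl|rfl
            exacts [hu3, hu94, hu115, hu129]
          refine ⟨↑({s(![0,0,0], ![0,0,1]), s(![1,0,1], ![1,1,1]), s(![0,1,1], ![0,1,0]), s(![1,1,0], ![1,0,0])} : Finset (Sym2 (Fin 3 → Fin 2))), pm_of_finset _ (by decide) (by decide), ![0,0,0], (Walk.cons (by decide : Q3.Adj ![0,0,0] ![0,0,1]) (Walk.cons (by decide : Q3.Adj ![0,0,1] ![1,0,1]) (Walk.cons (by decide : Q3.Adj ![1,0,1] ![1,1,1]) (Walk.cons (by decide : Q3.Adj ![1,1,1] ![0,1,1]) (Walk.cons (by decide : Q3.Adj ![0,1,1] ![0,1,0]) (Walk.cons (by decide : Q3.Adj ![0,1,0] ![1,1,0]) (Walk.cons (by decide : Q3.Adj ![1,1,0] ![1,0,0]) (Walk.cons (by decide : Q3.Adj ![1,0,0] ![0,0,0]) (Walk.nil : Q3.Walk ![0,0,0] ![0,0,0]))))))))), by decide, by decide, ?_⟩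
          rw [hMeq134]
          rw [← Finset.coe_union]
          ext e
          rw [Finset.mem_coe, Set.mem_setOf_eq]
          revert e
          decide

def mfin : Finset (Sym2 WV) := {s((Sum.inr ⟨![0,1,0], by decide⟩ : WV), (Sum.inr ⟨![0,1,1], by decide⟩ : WV)), s((Sum.inl ⟨![1,1,1], by decide⟩ : WV), (Sum.inl ⟨![1,0,1], by decide⟩ : WV)), s((Sum.inr ⟨![1,0,0], by decide⟩ : WV), (Sum.inl ⟨![1,0,0], by decide⟩ : WV)), s((Sum.inr ⟨![1,0,1], by decide⟩ : WV), (Sum.inr ⟨![0,0,1], by decide⟩ : WV)), s((Sum.inr ⟨![1,1,0], by decide⟩ : WV), (Sum.inr ⟨![1,1,1], by decide⟩ : WV)), s((Sum.inl ⟨![0,0,1], by decide⟩ : WV), (Sum.inl ⟨![0,1,1], by decide⟩ : WV)), s((Sum.inl ⟨![1,1,0], by decide⟩ : WV), (Sum.inl ⟨![0,1,0], by decide⟩ : WV))}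

lemma hMpm : IsPerfectMatchingSet G2 (↑mfin) := pm_of_finset _ (by decide) (by decide)

def fcomp0 : WV → Bool := fun w => decide (w = (Sum.inl ⟨![0,0,1], by decide⟩ : WV) ∨ w = (Sum.inl ⟨![0,1,1], by decide⟩ : WV) ∨ w = (Sum.inl ⟨![1,0,1], by decide⟩ : WV) ∨ w = (Sum.inl ⟨![1,1,1], by decide⟩ : WV))

def fcomp1 : WV → Bool := fun w => decide (w = (Sum.inl ⟨![0,0,1], by decide⟩ : WV) ∨ w = (Sum.inl ⟨![0,1,0], by decide⟩ : WV) ∨ w = (Sum.inl ⟨![0,1,1], by decide⟩ : WV) ∨ w = (Sum.inl ⟨![1,0,0], by decide⟩ : WV) ∨ w = (Sum.inl ⟨![1,0,1], by decide⟩ : WV) ∨ w = (Sum.inl ⟨![1,1,0], by decide⟩ : WV) ∨ w = (Sum.inl ⟨![1,1,1], by decide⟩ : WV) ∨ w = (Sum.inr ⟨![0,0,1], by decide⟩ : WV) ∨ w = (Sum.inr ⟨![1,0,0], by decide⟩ : WV) ∨ w = (Sum.inr ⟨![1,0,1], by decide⟩ : WV))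

lemma hno : ¬ ∃ N, IsPerfectMatchingSet G2 N ∧ IsHamiltonianCycleSet G2 ((↑mfin : Set (Sym2 WV)) ∪ N) := by
  rintro ⟨N, hN, a, c, hc, hsup, hH⟩
  have hdisj : ∀ e ∈ (↑mfin : Set (Sym2 WV)), e ∉ N := pm_pm_disjoint hMpm hN hc hsup hH
  obtain ⟨u136, ha137, hu138⟩ := pm_partner hN (Sum.inl ⟨![0,0,1], by decide⟩ : WV)
  have : ∀ x : WV, G2.Adj (Sum.inl ⟨![0,0,1], by decide⟩ : WV) x → x = (Sum.inl ⟨![0,1,1], by decide⟩ : WV) ∨ x = (Sum.inl ⟨![1,0,1], by decide⟩ : WV) ∨ x = (Sum.inr ⟨![0,0,1], by decide⟩ : WV) := by decide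
  rcases this u136 ha137 with rfl|rfl|rfl
  · -- conflict: edge in M
    exact absurd hu138 (hdisj _ (Finset.mem_coe.mpr (by decide)))
  · -- take ('L', (0, 0, 1)) - ('L', (1, 0, 1))
    obtain ⟨u139, ha140, hu141⟩ := pm_partner hN (Sum.inl ⟨![1,0,0], by decide⟩ : WV)
    have : ∀ x : WV, G2.Adj (Sum.inl ⟨![1,0,0], by decide⟩ : WV) x → x = (Sum.inl ⟨![1,0,1], by decide⟩ : WV) ∨ x = (Sum.inl ⟨![1,1,0], by decide⟩ : WV) ∨ x = (Sum.inr ⟨![1,0,0], by decide⟩ : WV) := by decide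
    rcases this u139 ha140 with rfl|rfl|rfl
    · -- conflict: matched
      have hp142 : s((Sum.inl ⟨![1,0,1], by decide⟩ : WV), (Sum.inl ⟨![0,0,1], by decide⟩ : WV)) ∈ N := by rw [Sym2.eq_swap] at hu138; exact hu138
      have hx143 : s((Sum.inl ⟨![1,0,1], by decide⟩ : WV), (Sum.inl ⟨![1,0,0], by decide⟩ : WV)) ∈ N := by rw [Sym2.eq_swap] at hu141; exact hu141
      exact absurd (pm_unique hN hp142 hx143) (by decide)
    · -- take ('L', (1, 0, 0)) - ('L', (1, 1, 0))
      obtain ⟨u144, ha145, hu146⟩ := pm_partner hN (Sum.inl ⟨![1,1,1], by decide⟩ : WV)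
      have : ∀ x : WV, G2.Adj (Sum.inl ⟨![1,1,1], by decide⟩ : WV) x → x = (Sum.inl ⟨![0,1,1], by decide⟩ : WV) ∨ x = (Sum.inl ⟨![1,0,1], by decide⟩ : WV) ∨ x = (Sum.inl ⟨![1,1,0], by decide⟩ : WV) := by decide
      rcases this u144 ha145 with rfl|rfl|rfl
      · -- take ('L', (1, 1, 1)) - ('L', (0, 1, 1))
        obtain ⟨u147, ha148, hu149⟩ := pm_partner hN (Sum.inl ⟨![0,1,0], by decide⟩ : WV)
        have : ∀ x : WV, G2.Adj (Sum.inl ⟨![0,1,0], by decide⟩ : WV) x → x = (Sum.inl ⟨![0,1,1], by decide⟩ : WV) ∨ x = (Sum.inl ⟨![1,1,0], by decide⟩ : WV) ∨ x = (Sum.inr ⟨![0,1,0], by decide⟩ : WV) := by decide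
        rcases this u147 ha148 with rfl|rfl|rfl
        · -- conflict: matched
          have hp150 : s((Sum.inl ⟨![0,1,1], by decide⟩ : WV), (Sum.inl ⟨![1,1,1], by decide⟩ : WV)) ∈ N := by rw [Sym2.eq_swap] at hu146; exact hu146
          have hx151 : s((Sum.inl ⟨![0,1,1], by decide⟩ : WV), (Sum.inl ⟨![0,1,0], by decide⟩ : WV)) ∈ N := by rw [Sym2.eq_swap] at hu149; exact hu149
          exact absurd (pm_unique hN hp150 hx151) (by decide)
        · -- conflict: matched
          have hp152 : s((Sum.inl ⟨![1,1,0], by decide⟩ : WV), (Sum.inl ⟨![1,0,0], by decide⟩ : WV)) ∈ N := by rw [Sym2.eq_swap] at hu141; exact hu141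
          have hx153 : s((Sum.inl ⟨![1,1,0], by decide⟩ : WV), (Sum.inl ⟨![0,1,0], by decide⟩ : WV)) ∈ N := by rw [Sym2.eq_swap] at hu149; exact hu149
          exact absurd (pm_unique hN hp152 hx153) (by decide)
        · -- take ('L', (0, 1, 0)) - ('R', (0, 1, 0))
          obtain ⟨u154, ha155, hu156⟩ := pm_partner hN (Sum.inr ⟨![0,0,1], by decide⟩ : WV)
          have : ∀ x : WV, G2.Adj (Sum.inr ⟨![0,0,1], by decide⟩ : WV) x → x = (Sum.inr ⟨![0,1,1], by decide⟩ : WV) ∨ x = (Sum.inr ⟨![1,0,1], by decide⟩ : WV) ∨ x = (Sum.inl ⟨![0,0,1], by decide⟩ : WV) := by decide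
          rcases this u154 ha155 with rfl|rfl|rfl
          · -- take ('R', (0, 0, 1)) - ('R', (0, 1, 1))
            obtain ⟨u157, ha158, hu159⟩ := pm_partner hN (Sum.inr ⟨![1,1,0], by decide⟩ : WV)
            have : ∀ x : WV, G2.Adj (Sum.inr ⟨![1,1,0], by decide⟩ : WV) x → x = (Sum.inr ⟨![0,1,0], by decide⟩ : WV) ∨ x = (Sum.inr ⟨![1,0,0], by decide⟩ : WV) ∨ x = (Sum.inr ⟨![1,1,1], by decide⟩ : WV) := by decide
            rcases this u157 ha158 with rfl|rfl|rfl
            · -- conflict: matched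
              have hp160 : s((Sum.inr ⟨![0,1,0], by decide⟩ : WV), (Sum.inl ⟨![0,1,0], by decide⟩ : WV)) ∈ N := by rw [Sym2.eq_swap] at hu149; exact hu149
              have hx161 : s((Sum.inr ⟨![0,1,0], by decide⟩ : WV), (Sum.inr ⟨![1,1,0], by decide⟩ : WV)) ∈ N := by rw [Sym2.eq_swap] at hu159; exact hu159
              exact absurd (pm_unique hN hp160 hx161) (by decide)
            · -- take ('R', (1, 1, 0)) - ('R', (1, 0, 0))
              obtain ⟨u162, ha163, hu164⟩ := pm_partner hN (Sum.inr ⟨![1,0,1], by decide⟩ : WV)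
              have : ∀ x : WV, G2.Adj (Sum.inr ⟨![1,0,1], by decide⟩ : WV) x → x = (Sum.inr ⟨![0,0,1], by decide⟩ : WV) ∨ x = (Sum.inr ⟨![1,0,0], by decide⟩ : WV) ∨ x = (Sum.inr ⟨![1,1,1], by decide⟩ : WV) := by decide
              rcases this u162 ha163 with rfl|rfl|rfl
              · -- conflict: matched
                have hp165 : s((Sum.inr ⟨![0,0,1], by decide⟩ : WV), (Sum.inr ⟨![0,1,1], by decide⟩ : WV)) ∈ N := hu156
                have hx166 : s((Sum.inr ⟨![0,0,1], by decide⟩ : WV), (Sum.inr ⟨![1,0,1], by decide⟩ : WV)) ∈ N := by rw [Sym2.eq_swap] at hu164; exact hu164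
                exact absurd (pm_unique hN hp165 hx166) (by decide)
              · -- conflict: matched
                have hp167 : s((Sum.inr ⟨![1,0,0], by decide⟩ : WV), (Sum.inr ⟨![1,1,0], by decide⟩ : WV)) ∈ N := by rw [Sym2.eq_swap] at hu159; exact hu159
                have hx168 : s((Sum.inr ⟨![1,0,0], by decide⟩ : WV), (Sum.inr ⟨![1,0,1], by decide⟩ : WV)) ∈ N := by rw [Sym2.eq_swap] at hu164; exact hu164
                exact absurd (pm_unique hN hp167 hx168) (by decide)
              · -- take ('R', (1, 0, 1)) - ('R', (1, 1, 1))
                have hNeq169 : N = ↑({s((Sum.inl ⟨![0,0,1], by decide⟩ : WV), (Sum.inl ⟨![1,0,1], by decide⟩ : WV)), s((Sum.inl ⟨![1,0,0], by decide⟩ : WV), (Sum.inl ⟨![1,1,0], by decide⟩ : WV)), s((Sum.inl ⟨![1,1,1], by decide⟩ : WV), (Sum.inl ⟨![0,1,1], by decide⟩ : WV)), s((Sum.inl ⟨![0,1,0], by decide⟩ : WV), (Sum.inr ⟨![0,1,0], by decide⟩ : WV)), s((Sum.inr ⟨![0,0,1], by decide⟩ : WV), (Sum.inr ⟨![0,1,1],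 by decide⟩ : WV)), s((Sum.inr ⟨![1,1,0], by decide⟩ : WV), (Sum.inr ⟨![1,0,0], by decide⟩ : WV)), s((Sum.inr ⟨![1,0,1], by decide⟩ : WV), (Sum.inr ⟨![1,1,1], by decide⟩ : WV))} : Finset (Sym2 WV)) := by
                  refine pm_eq hN _ ?_ (by decide)
                  intro e he
                  simp only [Finset.mem_insert, Finset.mem_singleton] at he
                  rcases he with rfl|rfl|rfl|rfl|rfl|rfl|rfl
                  exacts [hu138, hu141, hu146, hu149, hu156, hu159, hu164]
                have key : ∀ x y : WV, s(x,y) ∈ (mfin ∪ ({s((Sum.inl ⟨![0,0,1], by decide⟩ : WV), (Sum.inl ⟨![1,0,1], by decide⟩ : WV)), s((Sum.inl ⟨![1,0,0], by decide⟩ : WV), (Sum.inl ⟨![1,1,0], by decide⟩ : WV)), s((Sum.inl ⟨![1,1,1], by decide⟩ : WV), (Sum.inl ⟨![0,1,1], by decide⟩ : WV)), s((Sum.inl ⟨![0,1,0], by decide⟩ : WV), (Sum.inr ⟨![0,1,0], by decide⟩ : WV)), s((Sum.inr ⟨![0,0,1], by decide⟩ : WV), (Sum.inr ⟨![0,1,1],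 by decide⟩ : WV)), s((Sum.inr ⟨![1,1,0], by decide⟩ : WV), (Sum.inr ⟨![1,0,0], by decide⟩ : WV)), s((Sum.inr ⟨![1,0,1], by decide⟩ : WV), (Sum.inr ⟨![1,1,1], by decide⟩ : WV))} : Finset (Sym2 WV))) → fcomp0 x = fcomp0 y := by decide
                have hcross : ∀ x y : WV, s(x,y) ∈ c.edges → fcomp0 x = fcomp0 y := by
                  intro x y hxy
                  have hxy' : s(x,y) ∈ ((↑mfin : Set (Sym2 WV)) ∪ N) := by rw [hH]; exact hxy
                  rw [hNeq169] at hxy'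
                  refine key x y ?_
                  rw [Finset.mem_union]
                  rcases hxy' with h | h
                  · exact Or.inl (Finset.mem_coe.mp h)
                  · exact Or.inr (Finset.mem_coe.mp h)
                have h1 := walk_const fcomp0 c hcross (Sum.inl ⟨![0,0,1], by decide⟩ : WV) (hsup _)
                have h2 := walk_const fcomp0 c hcross (Sum.inl ⟨![0,1,0], by decide⟩ : WV) (hsup _)
                exact absurd (h1.trans h2.symm) (by decide)
            · -- conflict: edge in M
              exact absurd hu159 (hdisj _ (Finset.mem_coe.mpr (by decide)))
          · -- conflict: edge in M
            exact absurd hu156 (hdisj _ (Finset.mem_coe.mpr (by decide)))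
          · -- conflict: matched
            have hp170 : s((Sum.inl ⟨![0,0,1], by decide⟩ : WV), (Sum.inl ⟨![1,0,1], by decide⟩ : WV)) ∈ N := hu138
            have hx171 : s((Sum.inl ⟨![0,0,1], by decide⟩ : WV), (Sum.inr ⟨![0,0,1], by decide⟩ : WV)) ∈ N := by rw [Sym2.eq_swap] at hu156; exact hu156
            exact absurd (pm_unique hN hp170 hx171) (by decide)
      · -- conflict: matched
        have hp172 : s((Sum.inl ⟨![1,0,1], by decide⟩ : WV), (Sum.inl ⟨![0,0,1], by decide⟩ : WV)) ∈ N := by rw [Sym2.eq_swap] at hu138; exact hu138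
        have hx173 : s((Sum.inl ⟨![1,0,1], by decide⟩ : WV), (Sum.inl ⟨![1,1,1], by decide⟩ : WV)) ∈ N := by rw [Sym2.eq_swap] at hu146; exact hu146
        exact absurd (pm_unique hN hp172 hx173) (by decide)
      · -- conflict: matched
        have hp174 : s((Sum.inl ⟨![1,1,0], by decide⟩ : WV), (Sum.inl ⟨![1,0,0], by decide⟩ : WV)) ∈ N := by rw [Sym2.eq_swap] at hu141; exact hu141
        have hx175 : s((Sum.inl ⟨![1,1,0], by decide⟩ : WV), (Sum.inl ⟨![1,1,1], by decide⟩ : WV)) ∈ N := by rw [Sym2.eq_swap] at hu146; exact hu146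
        exact absurd (pm_unique hN hp174 hx175) (by decide)
    · -- conflict: edge in M
      exact absurd hu141 (hdisj _ (Finset.mem_coe.mpr (by decide)))
  · -- take ('L', (0, 0, 1)) - ('R', (0, 0, 1))
    obtain ⟨u176, ha177, hu178⟩ := pm_partner hN (Sum.inl ⟨![1,0,1], by decide⟩ : WV)
    have : ∀ x : WV, G2.Adj (Sum.inl ⟨![1,0,1], by decide⟩ : WV) x → x = (Sum.inl ⟨![0,0,1], by decide⟩ : WV) ∨ x = (Sum.inl ⟨![1,0,0], by decide⟩ : WV) ∨ x = (Sum.inl ⟨![1,1,1], by decide⟩ : WV) := by decide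
    rcases this u176 ha177 with rfl|rfl|rfl
    · -- conflict: matched
      have hp179 : s((Sum.inl ⟨![0,0,1], by decide⟩ : WV), (Sum.inr ⟨![0,0,1], by decide⟩ : WV)) ∈ N := hu138
      have hx180 : s((Sum.inl ⟨![0,0,1], by decide⟩ : WV), (Sum.inl ⟨![1,0,1], by decide⟩ : WV)) ∈ N := by rw [Sym2.eq_swap] at hu178; exact hu178
      exact absurd (pm_unique hN hp179 hx180) (by decide)
    · -- take ('L', (1, 0, 1)) - ('L', (1, 0, 0))
      obtain ⟨u181, ha182, hu183⟩ := pm_partner hN (Sum.inl ⟨![1,1,0], by decide⟩ : WV)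
      have : ∀ x : WV, G2.Adj (Sum.inl ⟨![1,1,0], by decide⟩ : WV) x → x = (Sum.inl ⟨![0,1,0], by decide⟩ : WV) ∨ x = (Sum.inl ⟨![1,0,0], by decide⟩ : WV) ∨ x = (Sum.inl ⟨![1,1,1], by decide⟩ : WV) := by decide
      rcases this u181 ha182 with rfl|rfl|rfl
      · -- conflict: edge in M
        exact absurd hu183 (hdisj _ (Finset.mem_coe.mpr (by decide)))
      · -- conflict: matched
        have hp184 : s((Sum.inl ⟨![1,0,0], by decide⟩ : WV), (Sum.inl ⟨![1,0,1], by decide⟩ : WV)) ∈ N := by rw [Sym2.eq_swap] at hu178; exact hu178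
        have hx185 : s((Sum.inl ⟨![1,0,0], by decide⟩ : WV), (Sum.inl ⟨![1,1,0], by decide⟩ : WV)) ∈ N := by rw [Sym2.eq_swap] at hu183; exact hu183
        exact absurd (pm_unique hN hp184 hx185) (by decide)
      · -- take ('L', (1, 1, 0)) - ('L', (1, 1, 1))
        obtain ⟨u186, ha187, hu188⟩ := pm_partner hN (Sum.inl ⟨![0,1,1], by decide⟩ : WV)
        have : ∀ x : WV, G2.Adj (Sum.inl ⟨![0,1,1], by decide⟩ : WV) x → x = (Sum.inl ⟨![0,0,1], by decide⟩ : WV) ∨ x = (Sum.inl ⟨![0,1,0], by decide⟩ : WV) ∨ x = (Sum.inl ⟨![1,1,1], by decide⟩ : WV) := by decide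
        rcases this u186 ha187 with rfl|rfl|rfl
        · -- conflict: matched
          have hp189 : s((Sum.inl ⟨![0,0,1], by decide⟩ : WV), (Sum.inr ⟨![0,0,1], by decide⟩ : WV)) ∈ N := hu138
          have hx190 : s((Sum.inl ⟨![0,0,1], by decide⟩ : WV), (Sum.inl ⟨![0,1,1], by decide⟩ : WV)) ∈ N := by rw [Sym2.eq_swap] at hu188; exact hu188
          exact absurd (pm_unique hN hp189 hx190) (by decide)
        · -- take ('L', (0, 1, 1)) - ('L', (0, 1, 0))
          obtain ⟨u191, ha192, hu193⟩ := pm_partner hN (Sum.inr ⟨![0,1,0], by decide⟩ : WV)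
          have : ∀ x : WV, G2.Adj (Sum.inr ⟨![0,1,0], by decide⟩ : WV) x → x = (Sum.inr ⟨![0,1,1], by decide⟩ : WV) ∨ x = (Sum.inr ⟨![1,1,0], by decide⟩ : WV) ∨ x = (Sum.inl ⟨![0,1,0], by decide⟩ : WV) := by decide
          rcases this u191 ha192 with rfl|rfl|rfl
          · -- conflict: edge in M
            exact absurd hu193 (hdisj _ (Finset.mem_coe.mpr (by decide)))
          · -- take ('R', (0, 1, 0)) - ('R', (1, 1, 0))
            obtain ⟨u194, ha195, hu196⟩ := pm_partner hN (Sum.inr ⟨![0,1,1], by decide⟩ : WV)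
            have : ∀ x : WV, G2.Adj (Sum.inr ⟨![0,1,1], by decide⟩ : WV) x → x = (Sum.inr ⟨![0,0,1], by decide⟩ : WV) ∨ x = (Sum.inr ⟨![0,1,0], by decide⟩ : WV) ∨ x = (Sum.inr ⟨![1,1,1], by decide⟩ : WV) := by decide
            rcases this u194 ha195 with rfl|rfl|rfl
            · -- conflict: matched
              have hp197 : s((Sum.inr ⟨![0,0,1], by decide⟩ : WV), (Sum.inl ⟨![0,0,1], by decide⟩ : WV)) ∈ N := by rw [Sym2.eq_swap] at hu138; exact hu138
              have hx198 : s((Sum.inr ⟨![0,0,1], by decide⟩ : WV), (Sum.inr ⟨![0,1,1], by decide⟩ : WV)) ∈ N := by rw [Sym2.eq_swap] at hu196; exact hu196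
              exact absurd (pm_unique hN hp197 hx198) (by decide)
            · -- conflict: matched
              have hp199 : s((Sum.inr ⟨![0,1,0], by decide⟩ : WV), (Sum.inr ⟨![1,1,0], by decide⟩ : WV)) ∈ N := hu193
              have hx200 : s((Sum.inr ⟨![0,1,0], by decide⟩ : WV), (Sum.inr ⟨![0,1,1], by decide⟩ : WV)) ∈ N := by rw [Sym2.eq_swap] at hu196; exact hu196
              exact absurd (pm_unique hN hp199 hx200) (by decide)
            · -- take ('R', (0, 1, 1)) - ('R', (1, 1, 1))
              obtain ⟨u201, ha202, hu203⟩ := pm_partner hN (Sum.inr ⟨![1,0,0], by decide⟩ : WV)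
              have : ∀ x : WV, G2.Adj (Sum.inr ⟨![1,0,0], by decide⟩ : WV) x → x = (Sum.inr ⟨![1,0,1], by decide⟩ : WV) ∨ x = (Sum.inr ⟨![1,1,0], by decide⟩ : WV) ∨ x = (Sum.inl ⟨![1,0,0], by decide⟩ : WV) := by decide
              rcases this u201 ha202 with rfl|rfl|rfl
              · -- take ('R', (1, 0, 0)) - ('R', (1, 0, 1))
                have hNeq204 : N = ↑({s((Sum.inl ⟨![0,0,1], by decide⟩ : WV), (Sum.inr ⟨![0,0,1], by decide⟩ : WV)), s((Sum.inl ⟨![1,0,1], by decide⟩ : WV), (Sum.inl ⟨![1,0,0], by decide⟩ : WV)), s((Sum.inl ⟨![1,1,0], by decide⟩ : WV), (Sum.inl ⟨![1,1,1], by decide⟩ : WV)), s((Sum.inl ⟨![0,1,1], by decide⟩ : WV), (Sum.inl ⟨![0,1,0], by decide⟩ : WV)), s((Sum.inr ⟨![0,1,0], by decide⟩ : WV), (Sum.inr ⟨![1,1,0], by decide⟩ : WV)), s((Sum.inr ⟨![0,1,1], by decide⟩ : WV), (Sum.inr ⟨![1,1,1], by decide⟩ : WV)), s((Sum.inr ⟨![1,0,0],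 by decide⟩ : WV), (Sum.inr ⟨![1,0,1], by decide⟩ : WV))} : Finset (Sym2 WV)) := by
                  refine pm_eq hN _ ?_ (by decide)
                  intro e he
                  simp only [Finset.mem_insert, Finset.mem_singleton] at he
                  rcases he with rfl|rfl|rfl|rfl|rfl|rfl|rfl
                  exacts [hu138, hu178, hu183, hu188, hu193, hu196, hu203]
                have key : ∀ x y : WV, s(x,y) ∈ (mfin ∪ ({s((Sum.inl ⟨![0,0,1], by decide⟩ : WV), (Sum.inr ⟨![0,0,1], by decide⟩ : WV)), s((Sum.inl ⟨![1,0,1], by decide⟩ : WV), (Sum.inl ⟨![1,0,0], by decide⟩ : WV)), s((Sum.inl ⟨![1,1,0], by decide⟩ : WV), (Sum.inl ⟨![1,1,1], by decide⟩ : WV)), s((Sum.inl ⟨![0,1,1], by decide⟩ : WV), (Sum.inl ⟨![0,1,0], by decide⟩ : WV)), s((Sum.inr ⟨![0,1,0], by decide⟩ : WV), (Sum.inr ⟨![1,1,0], by decide⟩ : WV)), s((Sum.inr ⟨![0,1,1], by decide⟩ : WV), (Sum.inr ⟨![1,1,1], by decide⟩ : WV)), s((Sum.inr ⟨![1,0,0],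 by decide⟩ : WV), (Sum.inr ⟨![1,0,1], by decide⟩ : WV))} : Finset (Sym2 WV))) → fcomp1 x = fcomp1 y := by decide
                have hcross : ∀ x y : WV, s(x,y) ∈ c.edges → fcomp1 x = fcomp1 y := by
                  intro x y hxy
                  have hxy' : s(x,y) ∈ ((↑mfin : Set (Sym2 WV)) ∪ N) := by rw [hH]; exact hxy
                  rw [hNeq204] at hxy'
                  refine key x y ?_
                  rw [Finset.mem_union]
                  rcases hxy' with h | h
                  · exact Or.inl (Finset.mem_coe.mp h)
                  · exact Or.inr (Finset.mem_coe.mp h)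
                have h1 := walk_const fcomp1 c hcross (Sum.inl ⟨![0,0,1], by decide⟩ : WV) (hsup _)
                have h2 := walk_const fcomp1 c hcross (Sum.inr ⟨![0,1,0], by decide⟩ : WV) (hsup _)
                exact absurd (h1.trans h2.symm) (by decide)
              · -- conflict: matched
                have hp205 : s((Sum.inr ⟨![1,1,0], by decide⟩ : WV), (Sum.inr ⟨![0,1,0], by decide⟩ : WV)) ∈ N := by rw [Sym2.eq_swap] at hu193; exact hu193
                have hx206 : s((Sum.inr ⟨![1,1,0], by decide⟩ : WV), (Sum.inr ⟨![1,0,0], by decide⟩ : WV)) ∈ N := by rw [Sym2.eq_swap] at hu203; exact hu203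
                exact absurd (pm_unique hN hp205 hx206) (by decide)
              · -- conflict: matched
                have hp207 : s((Sum.inl ⟨![1,0,0], by decide⟩ : WV), (Sum.inl ⟨![1,0,1], by decide⟩ : WV)) ∈ N := by rw [Sym2.eq_swap] at hu178; exact hu178
                have hx208 : s((Sum.inl ⟨![1,0,0], by decide⟩ : WV), (Sum.inr ⟨![1,0,0], by decide⟩ : WV)) ∈ N := by rw [Sym2.eq_swap] at hu203; exact hu203
                exact absurd (pm_unique hN hp207 hx208) (by decide)
          · -- conflict: matched
            have hp209 : s((Sum.inl ⟨![0,1,0], by decide⟩ : WV), (Sum.inl ⟨![0,1,1], by decide⟩ : WV)) ∈ N := by rw [Sym2.eq_swap] at hu188; exact hu188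
            have hx210 : s((Sum.inl ⟨![0,1,0], by decide⟩ : WV), (Sum.inr ⟨![0,1,0], by decide⟩ : WV)) ∈ N := by rw [Sym2.eq_swap] at hu193; exact hu193
            exact absurd (pm_unique hN hp209 hx210) (by decide)
        · -- conflict: matched
          have hp211 : s((Sum.inl ⟨![1,1,1], by decide⟩ : WV), (Sum.inl ⟨![1,1,0], by decide⟩ : WV)) ∈ N := by rw [Sym2.eq_swap] at hu183; exact hu183
          have hx212 : s((Sum.inl ⟨![1,1,1], by decide⟩ : WV), (Sum.inl ⟨![0,1,1], by decide⟩ : WV)) ∈ N := by rw [Sym2.eq_swap] at hu188; exact hu188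
          exact absurd (pm_unique hN hp211 hx212) (by decide)
    · -- conflict: edge in M
      exact absurd hu178 (hdisj _ (Finset.mem_coe.mpr (by decide)))

/-- `Q₃` is PMH, yet some star product of two copies of `Q₃` is not PMH: it admits a
perfect matching that cannot be extended to a Hamiltonian cycle. Hence the converse
of "if a star product of two cubic graphs is PMH then both factors are PMH" fails. -/
theorem stmt11 :
    IsPMH Q3 ∧
    ∃ (u v : Fin 3 → Fin 2) (σ : ↥(Q3.neighborSet u) ≃ ↥(Q3.neighborSet v)),
      ¬ IsPMH (starProd Q3 u Q3 v σ) ∧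
      ∃ M, IsPerfectMatchingSet (starProd Q3 u Q3 v σ) M ∧
        ¬ ∃ N, IsPerfectMatchingSet (starProd Q3 u Q3 v σ) N ∧
            IsHamiltonianCycleSet (starProd Q3 u Q3 v σ) (M ∪ N) := by
  refine ⟨q3pmh, ![0,0,0], ![0,0,0], σ0, ?_, ↑mfin, hMpm, hno⟩
  intro hP
  exact hno (hP (↑mfin) hMpm)
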